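/- Let λ(p) = p^{−N} ∏_{i=1}^M (p − b_i)^{κ_i} with M̃ = Σκ_i − N, and define the radial metric (∂/∂b_i, ∂/∂b_j) = Σ_n Res_{p=γ_n} [ (∂ log λ/∂b_i)(∂ log λ/∂b_j)(d log λ/d log p)^{−1} (d log p) ], where γ_n are the M distinct critical points of λ. Then (∂/∂b_i, ∂/∂b_j) = (1 − δ_{ij}) κ_i κ_j/(N b_i b_j) + δ_{ij} (κ_i − N)κ_i/(N b_i²). -/

import Mathlib

open Polynomial Finset

lemma my_leadingCoeff_basis (s : Finset ℂ) (x : ℂ) :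
    (Lagrange.basis s id x).leadingCoeff = (∏ y ∈ s.erase x, (x - y))⁻¹ := by
  rw [Lagrange.basis, Polynomial.leadingCoeff_prod, ← Finset.prod_inv_distrib]
  refine Finset.prod_congr rfl fun y hy => ?_
  by_cases hxy : (x : ℂ) = y
  · simp [hxy, Lagrange.basisDivisor_self]
  · rw [Lagrange.basisDivisor, leadingCoeff_mul, leadingCoeff_C,
      (monic_X_sub_C (id y)).leadingCoeff, mul_one]
    rfl

lemma key_sum (s : Finset ℂ) (A : Polynomial ℂ)
    (hA : A.degree < ((s.card - 1 : ℕ) : WithBot ℕ)) :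
    ∑ x ∈ s, A.eval x * (∏ y ∈ s.erase x, (x - y))⁻¹ = 0 := by
  have hinj : Set.InjOn id (s : Set ℂ) := Set.injOn_id _
  have hdeg : A.degree < (s.card : WithBot ℕ) :=
    lt_of_lt_of_le hA (by exact_mod_cast Nat.sub_le _ _)
  have hint := Lagrange.eq_interpolate hinj hdeg
  have hcoeff : A.coeff (s.card - 1) = 0 := coeff_eq_zero_of_degree_lt hA
  rw [hint, Lagrange.interpolate_apply, Polynomial.finset_sum_coeff] at hcoeff
  rw [← hcoeff]
  refine Finset.sum_congr rfl fun x hx => ?_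
  rw [coeff_C_mul, ← Lagrange.natDegree_basis hinj hx, Polynomial.coeff_natDegree,
    my_leadingCoeff_basis]
  simp

lemma aux_diag (κ E D bi Mt N : ℂ) (hE : E ≠ 0) (hD : D ≠ 0) (hbi : bi ≠ 0) (hN : N ≠ 0)
    (hMt : Mt ≠ 0) (hκ : κ ≠ 0) :
    -(κ * κ * E * ((0 - bi)⁻¹ * (Mt / (-N * ((0 - bi) * E)))) +
      κ * κ * D * ((bi - 0)⁻¹ * (Mt / (κ * bi * D)))) * Mt⁻¹
      = (κ - N) * κ / (N * bi ^ 2) := by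
  have h0bi : (0 : ℂ) - bi ≠ 0 := sub_ne_zero.mpr (Ne.symm hbi)
  have hbi0 : bi - (0 : ℂ) ≠ 0 := sub_ne_zero.mpr hbi
  have h1 : κ * κ * E * ((0 - bi)⁻¹ * (Mt / (-N * ((0 - bi) * E))))
      = -(κ * κ * Mt) / (N * bi ^ 2) := by
    rw [inv_mul_eq_div, div_div, mul_div_assoc']
    rw [div_eq_div_iff (by exact mul_ne_zero (mul_ne_zero (neg_ne_zero.mpr hN)
        (mul_ne_zero h0bi hE)) h0bi) (mul_ne_zero hN (pow_ne_zero 2 hbi))]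
    ring
  have h2 : κ * κ * D * ((bi - 0)⁻¹ * (Mt / (κ * bi * D))) = κ * Mt / bi ^ 2 := by
    rw [inv_mul_eq_div, div_div, mul_div_assoc']
    rw [div_eq_div_iff (by exact mul_ne_zero (mul_ne_zero (mul_ne_zero hκ hbi) hD) hbi0)
      (pow_ne_zero 2 hbi)]
    ring
  rw [h1, h2, ← div_eq_mul_inv]
  rw [div_eq_div_iff hMt (mul_ne_zero hN (pow_ne_zero 2 hbi))]
  field_simp
  ring

set_option maxHeartbeats 2000000 in
theorem radial_metric_caseI (M : ℕ) (b κ : Fin M → ℂ) (N : ℤ) (γ : Fin M → ℂ)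
    (hb : Function.Injective b) (hb0 : ∀ i, b i ≠ 0)
    (hκ : ∀ i, κ i ≠ 0) (hN : N ≠ 0)
    (hγinj : Function.Injective γ) (hγ0 : ∀ n, γ n ≠ 0) (hγb : ∀ n i, γ n ≠ b i)
    (Mt : ℂ) (hMt : Mt = (∑ i, κ i) - (N : ℂ)) (hMt0 : Mt ≠ 0)
    (hlog : ∀ p : ℂ, p ≠ 0 → (∀ i, p ≠ b i) →
      -(N : ℂ) / p + ∑ i, κ i / (p - b i)
        = Mt * (∏ n, (p - γ n)) / (p * ∏ i, (p - b i)))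
    (i j : Fin M) :
    ∑ n, κ i * κ j * (∏ k, (γ n - b k)) /
        ((γ n - b i) * (γ n - b j) * γ n
          * deriv (fun p => Mt * ∏ n', (p - γ n')) (γ n))
      = (if i = j then 0 else 1) * κ i * κ j / ((N : ℂ) * b i * b j)
        + (if i = j then 1 else 0) * (κ i - (N : ℂ)) * κ i / ((N : ℂ) * b i ^ 2) := by
  classical
  have hNc : (N : ℂ) ≠ 0 := Int.cast_ne_zero.mpr hN
  set W : Fin M → ℂ := fun n => ∏ m ∈ Finset.univ.erase n, (γ n - γ m) with hWdef
  have hWne : ∀ n, W n ≠ 0 := by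
    intro n
    refine Finset.prod_ne_zero_iff.mpr fun m hm => sub_ne_zero.mpr ?_
    exact fun h => (Finset.mem_erase.mp hm).1 (hγinj h.symm)
  -- the polynomial identity
  set P : Polynomial ℂ :=
    Polynomial.C (-(N : ℂ)) * ∏ k, (Polynomial.X - Polynomial.C (b k)) +
      ∑ i', Polynomial.C (κ i') * Polynomial.X *
        ∏ k ∈ Finset.univ.erase i', (Polynomial.X - Polynomial.C (b k)) with hPdef
  set G : Polynomial ℂ := Polynomial.C Mt * ∏ n, (Polynomial.X - Polynomial.C (γ n))
    with hGdef
  have hPG : P = G := by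
    apply Polynomial.eq_of_infinite_eval_eq
    have hfin : Set.Finite ({0} ∪ Set.range b : Set ℂ) :=
      (Set.finite_singleton 0).union (Set.finite_range b)
    refine Set.Infinite.mono ?_ hfin.infinite_compl
    intro x hx
    simp only [Set.mem_compl_iff, Set.mem_union, Set.mem_singleton_iff, Set.mem_range,
      not_or, not_exists] at hx
    obtain ⟨hx0, hxb'⟩ := hx
    have hxb : ∀ k, x ≠ b k := fun k h => hxb' k h.symm
    have hB : (∏ k, (x - b k)) ≠ 0 :=
      Finset.prod_ne_zero_iff.mpr fun k _ => sub_ne_zero.mpr (hxb k)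
    have heq : Mt * (∏ n, (x - γ n))
        = (-(N : ℂ) / x + ∑ i', κ i' / (x - b i')) * (x * ∏ k, (x - b k)) := by
      rw [hlog x hx0 hxb]; field_simp
    show Polynomial.eval x P = Polynomial.eval x G
    simp only [hPdef, hGdef, Polynomial.eval_add, Polynomial.eval_mul, Polynomial.eval_C,
      Polynomial.eval_X, Polynomial.eval_prod, Polynomial.eval_sub, Polynomial.eval_finset_sum]
    rw [heq, add_mul, Finset.sum_mul]
    congr 1
    · field_simp
    · refine Finset.sum_congr rfl fun i' _ => ?_
      have hsplit : ∏ k, (x - b k) = (x - b i') * ∏ k ∈ Finset.univ.erase i', (x - b k) :=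
        (Finset.mul_prod_erase _ _ (Finset.mem_univ i')).symm
      have h1 : x - b i' ≠ 0 := sub_ne_zero.mpr (hxb i')
      rw [hsplit]
      field_simp
  -- evaluation at 0
  have hE0 : Mt * ∏ n, (0 - γ n) = -(N : ℂ) * ∏ k, (0 - b k) := by
    have h := congrArg (Polynomial.eval 0) hPG
    simp only [hPdef, hGdef, Polynomial.eval_add, Polynomial.eval_mul, Polynomial.eval_C,
      Polynomial.eval_X, Polynomial.eval_prod, Polynomial.eval_sub, Polynomial.eval_finset_sum,
      mul_zero, zero_mul, Finset.sum_const_zero, add_zero] at h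
    linear_combination -h
  -- evaluation at b i'
  have hEb : ∀ i', Mt * ∏ n, (b i' - γ n)
      = κ i' * b i' * ∏ k ∈ Finset.univ.erase i', (b i' - b k) := by
    intro i'
    have h := congrArg (Polynomial.eval (b i')) hPG
    simp only [hPdef, hGdef, Polynomial.eval_add, Polynomial.eval_mul, Polynomial.eval_C,
      Polynomial.eval_X, Polynomial.eval_prod, Polynomial.eval_sub,
      Polynomial.eval_finset_sum] at h
    rw [Finset.prod_eq_zero (Finset.mem_univ i') (sub_self (b i')), mul_zero, zero_add,
      Finset.sum_eq_single i'] at h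
    · linear_combination -h
    · intro i'' _ hne
      rw [Finset.prod_eq_zero (Finset.mem_erase.mpr ⟨hne.symm, Finset.mem_univ i'⟩)
        (sub_self (b i')), mul_zero]
    · intro h'; exact absurd (Finset.mem_univ i') h'
  -- derivative
  have hderiv : ∀ n, deriv (fun p => Mt * ∏ n', (p - γ n')) (γ n) = Mt * W n := by
    intro n
    have hfun : (fun p : ℂ => Mt * ∏ n', (p - γ n')) = fun p => Polynomial.eval p G := by
      funext p
      simp [hGdef, Polynomial.eval_prod]
    rw [hfun, Polynomial.deriv, hGdef, ← Lagrange.nodal_eq, Polynomial.derivative_C_mul,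
      Polynomial.eval_mul, Polynomial.eval_C,
      Lagrange.eval_nodal_derivative_eval_node_eq (Finset.mem_univ n), Lagrange.eval_nodal]
  have hγbne : ∀ n k, γ n - b k ≠ 0 := fun n k => sub_ne_zero.mpr (hγb n k)
  have hQ'ne : ∀ n, Mt * W n ≠ 0 := fun n => mul_ne_zero hMt0 (hWne n)
  set t : Finset ℂ := Finset.univ.image γ with htdef
  have h0t : (0 : ℂ) ∉ t := by
    simp only [htdef, Finset.mem_image]
    rintro ⟨n, -, h⟩
    exact hγ0 n h
  have htcard : t.card = M := by
    rw [htdef, Finset.card_image_of_injective _ hγinj, Finset.card_univ, Fintype.card_fin]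
  have hprod0γ : (∏ n, (0 - γ n)) ≠ 0 :=
    Finset.prod_ne_zero_iff.mpr fun n _ => sub_ne_zero.mpr fun h => hγ0 n h.symm
  by_cases hij : i = j
  · -- diagonal case
    subst hij
    simp only [eq_self_iff_true, if_true, one_mul, zero_mul, zero_div, zero_add]
    set ee : Finset (Fin M) := Finset.univ.erase i with heedef
    set A : Polynomial ℂ :=
      Polynomial.C (κ i * κ i) * ∏ k ∈ ee, (Polynomial.X - Polynomial.C (b k)) with hAdef
    have hAeval : ∀ x : ℂ, A.eval x = κ i * κ i * ∏ k ∈ ee, (x - b k) := by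
      intro x
      simp [hAdef, Polynomial.eval_prod]
    have hbit : b i ∉ t := by
      simp only [htdef, Finset.mem_image]
      rintro ⟨n, -, h⟩
      exact hγb n i h
    have h0bt : (0 : ℂ) ∉ insert (b i) t := by
      simp only [Finset.mem_insert]
      rintro (h | h)
      · exact hb0 i h.symm
      · exact h0t h
    have hbins : b i ∉ insert (0 : ℂ) t := by
      simp only [Finset.mem_insert]
      rintro (h | h)
      · exact hb0 i h
      · exact hbit h
    set s : Finset ℂ := insert 0 (insert (b i) t) with hsdef
    have hscard : s.card = M + 2 := by
      rw [hsdef, Finset.card_insert_of_notMem h0bt, Finset.card_insert_of_notMem hbit, htcard]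
    have hdegA : A.degree < ((s.card - 1 : ℕ) : WithBot ℕ) := by
      have h1 : A.degree ≤ (ee.card : WithBot ℕ) := by
        rw [hAdef, ← Lagrange.nodal_eq]
        refine le_trans (Polynomial.degree_mul_le _ _) ?_
        rw [Lagrange.degree_nodal]
        calc (Polynomial.C (κ i * κ i)).degree + ee.card ≤ 0 + ee.card := by
              exact add_le_add_left (Polynomial.degree_C_le) _
          _ = ee.card := by rw [zero_add]
      refine lt_of_le_of_lt h1 ?_
      rw [hscard]
      have hc : ee.card = M - 1 := by
        rw [heedef, Finset.card_erase_of_mem (Finset.mem_univ i), Finset.card_univ,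
          Fintype.card_fin]
      rw [hc]
      have h2 : M + 2 - 1 = M + 1 := rfl
      rw [h2]
      exact_mod_cast Nat.lt_succ_of_le (Nat.sub_le _ _)
    have hsum := key_sum s A hdegA
    rw [hsdef, Finset.sum_insert h0bt, Finset.erase_insert h0bt, Finset.sum_insert hbit,
      Finset.sum_image (fun n _ m _ h => hγinj h)] at hsum
    have ht0prod : ∏ y ∈ t, ((0 : ℂ) - y) = ∏ n, (0 - γ n) := by
      rw [htdef, Finset.prod_image (fun m hm m' hm' h => hγinj h)]
    have hprod0 : ∏ y ∈ insert (b i) t, ((0 : ℂ) - y) = (0 - b i) * ∏ n, (0 - γ n) := by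
      rw [Finset.prod_insert hbit, ht0prod]
    have heraseb : (insert (0 : ℂ) (insert (b i) t)).erase (b i) = insert 0 t := by
      rw [Finset.insert_comm, Finset.erase_insert hbins]
    have hprodb : ∏ y ∈ (insert (0 : ℂ) (insert (b i) t)).erase (b i), (b i - y)
        = (b i - 0) * ∏ n, (b i - γ n) := by
      rw [heraseb, Finset.prod_insert h0t, htdef,
        Finset.prod_image (fun m hm m' hm' h => hγinj h)]
    have hprodγ : ∀ n, ∏ y ∈ (insert (0 : ℂ) (insert (b i) t)).erase (γ n), (γ n - y)
        = (γ n - 0) * ((γ n - b i) * W n) := by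
      intro n
      have he : (insert (0 : ℂ) (insert (b i) t)).erase (γ n)
          = insert 0 (insert (b i) (t.erase (γ n))) := by
        rw [Finset.erase_insert_of_ne (hγ0 n).symm,
          Finset.erase_insert_of_ne (Ne.symm (hγb n i))]
      have h0m : (0 : ℂ) ∉ insert (b i) (t.erase (γ n)) := by
        simp only [Finset.mem_insert]
        rintro (h | h)
        · exact hb0 i h.symm
        · exact h0t (Finset.mem_of_mem_erase h)
      have hbm : b i ∉ t.erase (γ n) := fun h => hbit (Finset.mem_of_mem_erase h)
      rw [he, Finset.prod_insert h0m, Finset.prod_insert hbm]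
      congr 2
      rw [htdef, ← Finset.image_erase hγinj,
        Finset.prod_image (fun m hm m' hm' h => hγinj h)]
    rw [hprod0, hprodb] at hsum
    simp only [hprodγ] at hsum
    have hsplit : ∀ n, ∏ k, (γ n - b k) = (γ n - b i) * ∏ k ∈ ee, (γ n - b k) := by
      intro n
      rw [heedef, ← Finset.mul_prod_erase _ _ (Finset.mem_univ i)]
    have hgoalsum : ∀ n, κ i * κ i * (∏ k, (γ n - b k)) /
        ((γ n - b i) * (γ n - b i) * γ n * deriv (fun p => Mt * ∏ n', (p - γ n')) (γ n))
        = (A.eval (γ n) * ((γ n - 0) * ((γ n - b i) * W n))⁻¹) * Mt⁻¹ := by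
      intro n
      rw [hderiv n, hsplit n, hAeval]
      field_simp [hγbne n i, hγ0 n, hMt0, hWne n]
      ring
    have hEee : (∏ k ∈ ee, ((0 : ℂ) - b k)) ≠ 0 :=
      Finset.prod_ne_zero_iff.mpr fun k _ => sub_ne_zero.mpr fun h => hb0 k h.symm
    have hDee : (∏ k ∈ ee, (b i - b k)) ≠ 0 := by
      refine Finset.prod_ne_zero_iff.mpr fun k hk => sub_ne_zero.mpr fun h => ?_
      exact (Finset.mem_erase.mp hk).1 (hb h.symm)
    have h0bi : (0 : ℂ) - b i ≠ 0 := sub_ne_zero.mpr (Ne.symm (hb0 i))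
    have hbsplit : ∏ k, ((0 : ℂ) - b k) = (0 - b i) * ∏ k ∈ ee, (0 - b k) := by
      rw [heedef, ← Finset.mul_prod_erase _ _ (Finset.mem_univ i)]
    have hγ0prod : ∏ n, ((0 : ℂ) - γ n)
        = -(N : ℂ) * ((0 - b i) * ∏ k ∈ ee, (0 - b k)) / Mt := by
      rw [eq_div_iff hMt0]
      linear_combination hE0 - (N : ℂ) * hbsplit
    have hγbprod : ∏ n, (b i - γ n) = κ i * b i * (∏ k ∈ ee, (b i - b k)) / Mt := by
      rw [eq_div_iff hMt0]
      linear_combination hEb i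
    calc ∑ n, κ i * κ i * (∏ k, (γ n - b k)) /
          ((γ n - b i) * (γ n - b i) * γ n * deriv (fun p => Mt * ∏ n', (p - γ n')) (γ n))
        = ∑ n, (A.eval (γ n) * ((γ n - 0) * ((γ n - b i) * W n))⁻¹) * Mt⁻¹ :=
          Finset.sum_congr rfl fun n _ => hgoalsum n
      _ = (∑ n, A.eval (γ n) * ((γ n - 0) * ((γ n - b i) * W n))⁻¹) * Mt⁻¹ := by
          rw [Finset.sum_mul]
      _ = (-(A.eval 0 * ((0 - b i) * ∏ n, (0 - γ n))⁻¹
            + A.eval (b i) * ((b i - 0) * ∏ n, (b i - γ n))⁻¹)) * Mt⁻¹ := by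
          congr 1
          linear_combination hsum
      _ = (κ i - (N : ℂ)) * κ i / ((N : ℂ) * b i ^ 2) := by
          have h0γ : (∏ n, ((0 : ℂ) - γ n))⁻¹
              = Mt / (-(N : ℂ) * ((0 - b i) * ∏ k ∈ ee, (0 - b k))) := by
            rw [hγ0prod, inv_div]
          have hbγ : (∏ n, (b i - γ n))⁻¹
              = Mt / (κ i * b i * ∏ k ∈ ee, (b i - b k)) := by
            rw [hγbprod, inv_div]
          rw [hAeval, hAeval]
          simp only [mul_inv]
          rw [h0γ, hbγ]
          exact aux_diag _ _ _ _ _ _ hEee hDee (hb0 i) hNc hMt0 (hκ i)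
  · -- off-diagonal case
    simp only [if_neg hij, one_mul, zero_mul, zero_div, add_zero]
    have hjmem : j ∈ Finset.univ.erase i :=
      Finset.mem_erase.mpr ⟨fun h => hij h.symm, Finset.mem_univ j⟩
    set dd : Finset (Fin M) := (Finset.univ.erase i).erase j with hdd
    set A : Polynomial ℂ :=
      Polynomial.C (κ i * κ j) * ∏ k ∈ dd, (Polynomial.X - Polynomial.C (b k)) with hAdef
    have hAeval : ∀ x : ℂ, A.eval x = κ i * κ j * ∏ k ∈ dd, (x - b k) := by
      intro x
      simp [hAdef, Polynomial.eval_prod]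
    set s : Finset ℂ := insert 0 t with hsdef
    have hscard : s.card = M + 1 := by
      rw [hsdef, Finset.card_insert_of_notMem h0t, htcard]
    have hMpos : 0 < M := Fin.pos i
    have hdegA : A.degree < ((s.card - 1 : ℕ) : WithBot ℕ) := by
      have h1 : A.degree ≤ (dd.card : WithBot ℕ) := by
        rw [hAdef, ← Lagrange.nodal_eq]
        refine le_trans (Polynomial.degree_mul_le _ _) ?_
        rw [Lagrange.degree_nodal]
        calc (Polynomial.C (κ i * κ j)).degree + dd.card ≤ 0 + dd.card := by
              exact add_le_add_left (Polynomial.degree_C_le) _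
          _ = dd.card := by rw [zero_add]
      refine lt_of_le_of_lt h1 ?_
      rw [hscard]
      have : dd.card = M - 2 := by
        rw [hdd, Finset.card_erase_of_mem hjmem, Finset.card_erase_of_mem (Finset.mem_univ i),
          Finset.card_univ, Fintype.card_fin]
        omega
      rw [this]
      have h2 : M + 1 - 1 = M := rfl
      rw [h2]
      exact_mod_cast Nat.sub_lt hMpos (by norm_num)
    have hsum := key_sum s A hdegA
    rw [hsdef, Finset.sum_insert h0t, Finset.erase_insert h0t] at hsum
    rw [Finset.sum_image (fun n _ m _ h => hγinj h)] at hsum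
    have herase : ∀ n, (insert (0 : ℂ) t).erase (γ n) = insert 0 (t.erase (γ n)) :=
      fun n => Finset.erase_insert_of_ne (hγ0 n).symm
    have htprod : ∀ n, ∏ y ∈ (insert (0 : ℂ) t).erase (γ n), (γ n - y) = (γ n - 0) * W n := by
      intro n
      rw [herase n, Finset.prod_insert (fun h => h0t (Finset.mem_of_mem_erase h))]
      congr 1
      rw [htdef, ← Finset.image_erase hγinj,
        Finset.prod_image (fun m hm m' hm' h => hγinj h)]
    have ht0prod : ∏ y ∈ t, ((0 : ℂ) - y) = ∏ n, (0 - γ n) := by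
      rw [htdef, Finset.prod_image (fun m hm m' hm' h => hγinj h)]
    rw [ht0prod] at hsum
    simp only [htprod] at hsum
    -- rewrite the goal sum
    have hsplit : ∀ n, ∏ k, (γ n - b k)
        = (γ n - b i) * ((γ n - b j) * ∏ k ∈ dd, (γ n - b k)) := by
      intro n
      rw [← Finset.mul_prod_erase _ _ (Finset.mem_univ i), ← Finset.mul_prod_erase _ _ hjmem]
    have hgoalsum : ∀ n, κ i * κ j * (∏ k, (γ n - b k)) /
        ((γ n - b i) * (γ n - b j) * γ n * deriv (fun p => Mt * ∏ n', (p - γ n')) (γ n))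
        = (A.eval (γ n) * ((γ n - 0) * W n)⁻¹) * Mt⁻¹ := by
      intro n
      rw [hderiv n, hsplit n, hAeval]
      field_simp [hγbne n i, hγbne n j, hγ0 n, hMt0, hWne n]
      ring
    calc ∑ n, κ i * κ j * (∏ k, (γ n - b k)) /
          ((γ n - b i) * (γ n - b j) * γ n * deriv (fun p => Mt * ∏ n', (p - γ n')) (γ n))
        = ∑ n, (A.eval (γ n) * ((γ n - 0) * W n)⁻¹) * Mt⁻¹ :=
          Finset.sum_congr rfl fun n _ => hgoalsum n
      _ = (∑ n, A.eval (γ n) * ((γ n - 0) * W n)⁻¹) * Mt⁻¹ := by rw [Finset.sum_mul]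
      _ = (-(A.eval 0 * (∏ n, (0 - γ n))⁻¹)) * Mt⁻¹ := by
          rw [eq_neg_of_add_eq_zero_right hsum]
      _ = κ i * κ j / ((N : ℂ) * b i * b j) := by
          have hEdd : (∏ k ∈ dd, ((0 : ℂ) - b k)) ≠ 0 :=
            Finset.prod_ne_zero_iff.mpr fun k _ => sub_ne_zero.mpr fun h => hb0 k h.symm
          have hbsplit : ∏ k, ((0 : ℂ) - b k)
              = (0 - b i) * ((0 - b j) * ∏ k ∈ dd, (0 - b k)) := by
            rw [← Finset.mul_prod_erase _ _ (Finset.mem_univ i),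
              ← Finset.mul_prod_erase _ _ hjmem]
          have hγ0prod : ∏ n, ((0 : ℂ) - γ n)
              = -(N : ℂ) * ((0 - b i) * ((0 - b j) * ∏ k ∈ dd, (0 - b k))) / Mt := by
            rw [eq_div_iff hMt0]
            linear_combination hE0 - (N : ℂ) * hbsplit
          have h0bi : (0 : ℂ) - b i ≠ 0 := sub_ne_zero.mpr (Ne.symm (hb0 i))
          have h0bj : (0 : ℂ) - b j ≠ 0 := sub_ne_zero.mpr (Ne.symm (hb0 j))
          have hE' : (∏ x ∈ dd, -b x : ℂ) ≠ 0 := by simpa using hEdd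
          have hden1 : (N : ℂ) * (b i * (b j * ∏ x ∈ dd, -b x)) ≠ 0 :=
            mul_ne_zero hNc (mul_ne_zero (hb0 i) (mul_ne_zero (hb0 j) hE'))
          have hden2 : (N : ℂ) * b i * b j ≠ 0 :=
            mul_ne_zero (mul_ne_zero hNc (hb0 i)) (hb0 j)
          rw [hAeval, hγ0prod]
          field_simp [hEdd, h0bi, h0bj]
          field_simp [hb0 i, hb0 j]
          ring
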